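/- arXiv:math/0102013 — 2 statements merged into one kernel-verified Lean document; each statement's English description precedes it below -/
import Mathlib

section
/- Let G be a group, T ⊆ H ⊆ G subgroups with the property that any two subgroups of H conjugate (in G) to T and contained in H are conjugate by an element of H (e.g. T a maximal torus of a compact Lie group and H a closed subgroup of maximal rank). Then the fixed point set of the left-multiplication action of T on G/H equals {xH : x⁻¹Tx ⊆ H}, and the map N_G(T) → G/H, y ↦ yH, induces a bijection N_G(T)/(N_G(T) ∩ H) ≅ {fixed points of T on G/H}. -/
/-- Let `T ⊆ H ⊆ G` be subgroups such that any subgroup of the form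
`x⁻¹Tx` contained in `H` is conjugate to `T` by an element of `H`
(the maximal-torus conjugacy hypothesis).  Then the fixed point set of the
left-multiplication action of `T` on `G/H` equals `{xH : x⁻¹Tx ⊆ H}`, and
`y ↦ yH` induces a bijection `N_G(T)/(N_G(T) ∩ H) ≅ {fixed points of T on G/H}`. -/
theorem stmt_2 {G : Type*} [Group G] (T H : Subgroup G) (hTH : T ≤ H)
    (hconj : ∀ x : G, (∀ t ∈ T, x⁻¹ * t * x ∈ H) →
      ∃ h ∈ H, ∀ g : G, g ∈ T ↔ (x * h)⁻¹ * g * (x * h) ∈ T) :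
    (MulAction.fixedPoints T (G ⧸ H) =
      {q : G ⧸ H | ∃ x : G, q = QuotientGroup.mk x ∧ ∀ t ∈ T, x⁻¹ * t * x ∈ H}) ∧
    Nonempty ((Subgroup.normalizer (T : Set G) ⧸ (Subgroup.normalizer (T : Set G) ⊓ H).subgroupOf
        (Subgroup.normalizer (T : Set G))) ≃
      MulAction.fixedPoints T (G ⧸ H)) := by
  have smul_mk : ∀ (t : T) (x : G),
      t • (QuotientGroup.mk x : G ⧸ H) = QuotientGroup.mk ((t : G) * x) := fun t x => rfl
  have key : ∀ q : G ⧸ H, q ∈ MulAction.fixedPoints T (G ⧸ H) ↔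
      ∃ x : G, q = QuotientGroup.mk x ∧ ∀ t ∈ T, x⁻¹ * t * x ∈ H := by
    intro q
    induction q using QuotientGroup.induction_on with
    | H x =>
      constructor
      · intro hq
        refine ⟨x, rfl, fun t ht => ?_⟩
        have h1 : (⟨t⁻¹, inv_mem ht⟩ : T) • (QuotientGroup.mk x : G ⧸ H) = QuotientGroup.mk x :=
          hq _
        rw [smul_mk, QuotientGroup.eq] at h1
        simpa [mul_assoc] using h1
      · rintro ⟨y, hy, hfix⟩
        intro t
        rw [hy, smul_mk, QuotientGroup.eq]
        have := hfix (t : G)⁻¹ (inv_mem t.2)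
        simpa [mul_assoc] using this
  constructor
  · ext q
    exact key q
  · -- build the bijection
    have hmem : ∀ n : (Subgroup.normalizer (T : Set G)), QuotientGroup.mk (n : G) ∈
        MulAction.fixedPoints T (G ⧸ H) := by
      intro n
      rw [key]
      refine ⟨n, rfl, fun t ht => hTH ?_⟩
      exact (Subgroup.mem_normalizer_iff''.mp n.2 t).mp ht
    let f : ((Subgroup.normalizer (T : Set G)) ⧸ ((Subgroup.normalizer (T : Set G)) ⊓ H).subgroupOf (Subgroup.normalizer (T : Set G))) →
        MulAction.fixedPoints T (G ⧸ H) :=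
      Quotient.lift (fun n : (Subgroup.normalizer (T : Set G)) => ⟨QuotientGroup.mk (n : G), hmem n⟩)
        (by
          intro a b hab
          have hab' := QuotientGroup.leftRel_apply.mp hab
          have : ((a : G))⁻¹ * b ∈ H := hab'.2
          exact Subtype.ext (QuotientGroup.eq.mpr this))
    refine ⟨Equiv.ofBijective f ⟨?_, ?_⟩⟩
    · intro a b
      induction a using Quotient.inductionOn with
      | h a =>
        induction b using Quotient.inductionOn with
        | h b =>
          intro hab
          have h1 : (QuotientGroup.mk (a : G) : G ⧸ H) = QuotientGroup.mk (b : G) :=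
            congrArg Subtype.val hab
          have h2 : ((a : G))⁻¹ * b ∈ H := QuotientGroup.eq.mp h1
          exact Quotient.sound (QuotientGroup.leftRel_apply.mpr
            ⟨(a⁻¹ * b : (Subgroup.normalizer (T : Set G))).2, h2⟩)
    · rintro ⟨q, hq⟩
      obtain ⟨x, rfl, hx⟩ := (key q).mp hq
      obtain ⟨h, hH, hnorm⟩ := hconj x hx
      have hn : x * h ∈ (Subgroup.normalizer (T : Set G)) := Subgroup.mem_normalizer_iff''.mpr hnorm
      refine ⟨Quotient.mk'' ⟨x * h, hn⟩, ?_⟩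
      refine Subtype.ext ?_
      show (QuotientGroup.mk (x * h) : G ⧸ H) = QuotientGroup.mk x
      exact QuotientGroup.eq.mpr (by simpa [mul_assoc] using (inv_mem hH : h⁻¹ ∈ H))
end

section
/- Let u₁,…,u_n be pairwise distinct elements of a field and m ≥ 0. Then ∑_{i=1}^n u_i^{n−1+m}/∏_{j≠i}(u_i − u_j) = h_m(u₁,…,u_n), the complete homogeneous symmetric polynomial of degree m. -/
open Finset Polynomial

section Aux

variable {F : Type*} [Field F]

private def SH (n m : ℕ) (u : Fin n → F) : F :=
  ∑ s : Sym (Fin n) m, ((s : Multiset (Fin n)).map u).prod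

private lemma SH_zero (n : ℕ) (u : Fin n → F) : SH n 0 u = 1 := by
  rw [SH, Fintype.sum_unique]
  rfl

private lemma SH_one (m : ℕ) (u : Fin 1 → F) : SH 1 m u = u 0 ^ m := by
  rw [SH]
  have hall : ∀ s : Sym (Fin 1) m, ((s : Multiset (Fin 1)).map u).prod = u 0 ^ m := by
    intro s
    have : (s : Multiset (Fin 1)).map u = Multiset.replicate m (u 0) := by
      rw [Multiset.eq_replicate]
      constructor
      · simp [s.2]
      · intro b hb
        obtain ⟨a, _, rfl⟩ := Multiset.mem_map.mp hb
        congr 1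
        exact Subsingleton.elim _ _
    rw [this, Multiset.prod_replicate]
  rw [Fintype.sum_congr _ (fun _ => u 0 ^ m) hall, Finset.sum_const]
  have hcard : Fintype.card (Sym (Fin 1) m) = 1 := by
    rw [Fintype.card_eq_one_iff]
    refine ⟨Sym.replicate m 0, fun s => ?_⟩
    apply Subtype.ext
    show (s : Multiset (Fin 1)) = Multiset.replicate m 0
    rw [Multiset.eq_replicate]
    exact ⟨s.2, fun b _ => Subsingleton.elim _ _⟩
  rw [Finset.card_univ, hcard, one_smul]

private lemma SH_rec (n m : ℕ) (u : Fin (n+1) → F) :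
    SH (n+1) (m+1) u
      = SH n (m+1) (u ∘ Fin.castSucc) + u (Fin.last n) * SH (n+1) m u := by
  classical
  set f : ∀ k, Sym (Fin (n+1)) k → F :=
    fun k s => ((s : Multiset (Fin (n+1))).map u).prod with hf
  have step1 : SH (n+1) (m+1) u
      = ∑ s : Sym (Option (Fin n)) (m+1),
          f (m+1) ((Sym.equivCongr finSuccEquivLast.symm) s) :=
    (Equiv.sum_comp (Sym.equivCongr finSuccEquivLast.symm) (f (m+1))).symm
  have step2 : ∑ s : Sym (Option (Fin n)) (m+1),
        f (m+1) ((Sym.equivCongr finSuccEquivLast.symm) s)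
      = ∑ x : Sym (Option (Fin n)) m ⊕ Sym (Fin n) (m+1),
          f (m+1) ((Sym.equivCongr finSuccEquivLast.symm) (SymOptionSuccEquiv.decode x)) :=
    (Equiv.sum_comp (symOptionSuccEquiv).symm
      (fun s => f (m+1) ((Sym.equivCongr finSuccEquivLast.symm) s))).symm
  rw [step1, step2, Fintype.sum_sum_type]
  have hinl : ∀ s : Sym (Option (Fin n)) m,
      f (m+1) ((Sym.equivCongr finSuccEquivLast.symm) (SymOptionSuccEquiv.decode (Sum.inl s)))
        = u (Fin.last n) * f m ((Sym.equivCongr finSuccEquivLast.symm) s) := by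
    intro s
    rw [SymOptionSuccEquiv.decode_inl]
    simp only [hf, Sym.equivCongr_apply, Sym.coe_map, Sym.coe_cons, Multiset.map_cons,
      Multiset.map_map, Multiset.prod_cons, Function.comp_apply, finSuccEquivLast_symm_none]
  have hinr : ∀ s : Sym (Fin n) (m+1),
      f (m+1) ((Sym.equivCongr finSuccEquivLast.symm) (SymOptionSuccEquiv.decode (Sum.inr s)))
        = (((s : Multiset (Fin n))).map (u ∘ Fin.castSucc)).prod := by
    intro s
    rw [SymOptionSuccEquiv.decode_inr]
    simp only [hf, Sym.equivCongr_apply, Sym.coe_map, Multiset.map_map]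
    congr 1
    apply Multiset.map_congr rfl
    intro x _
    simp [Function.comp, finSuccEquivLast_symm_some]
  rw [Finset.sum_congr rfl (fun s _ => hinl s), Finset.sum_congr rfl (fun s _ => hinr s),
    ← Finset.mul_sum]
  rw [Equiv.sum_comp (Sym.equivCongr finSuccEquivLast.symm) (f m)]
  rw [add_comm]
  rfl

private lemma SH_full (n : ℕ) (u : Fin (n+1) → F) (m : ℕ) :
    SH (n+1) m u
      = ∑ l ∈ Finset.range (m+1),
          u (Fin.last n) ^ (m - l) * SH n l (u ∘ Fin.castSucc) := by
  induction m with
  | zero => simp [SH_zero]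
  | succ m ih =>
    rw [SH_rec, ih, Finset.mul_sum, Finset.sum_range_succ _ (m+1)]
    rw [Nat.sub_self, pow_zero, one_mul, add_comm]
    congr 1
    apply Finset.sum_congr rfl
    intro l hl
    rw [Finset.mem_range] at hl
    rw [← mul_assoc, ← pow_succ', Nat.sub_add_comm (Nat.lt_succ_iff.mp hl)]

private lemma zero_sum (n : ℕ) (u : Fin (n+2) → F) (hu : Function.Injective u) :
    ∑ i : Fin (n+2), (∏ j ∈ univ.erase i, (u i - u j))⁻¹ = 0 := by
  classical
  have hinj : Set.InjOn u (univ : Finset (Fin (n+2))) := hu.injOn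
  have hcoeff : ∀ i : Fin (n+2),
      (Lagrange.basis univ u i).coeff (n+1) = Lagrange.nodalWeight univ u i := by
    intro i
    rw [Lagrange.basis_eq_prod_sub_inv_mul_nodal_div (mem_univ i),
      ← Lagrange.nodal_erase_eq_nodal_div (mem_univ i), Polynomial.coeff_C_mul]
    have hmon : (Lagrange.nodal (univ.erase i) u).Monic := Lagrange.nodal_monic
    have hdeg : (Lagrange.nodal (univ.erase i) u).natDegree = n+1 := by
      rw [Lagrange.natDegree_nodal, card_erase_of_mem (mem_univ i), card_univ,
        Fintype.card_fin]
      omega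
    rw [← hdeg, hmon.coeff_natDegree, mul_one]
  have h1 : ∑ i : Fin (n+2), (∏ j ∈ univ.erase i, (u i - u j))⁻¹
      = ∑ i : Fin (n+2), (Lagrange.basis univ u i).coeff (n+1) := by
    apply Finset.sum_congr rfl
    intro i _
    rw [hcoeff i, Lagrange.nodalWeight, ← Finset.prod_inv_distrib]
  rw [h1, ← Polynomial.finset_sum_coeff,
    Lagrange.sum_basis hinj ⟨0, mem_univ 0⟩, Polynomial.coeff_one]
  simp

private lemma erase_last_prod (n : ℕ) (f : Fin (n+2) → F) :
    ∏ j ∈ (univ : Finset (Fin (n+2))).erase (Fin.last (n+1)), f j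
      = ∏ j : Fin (n+1), f (Fin.castSucc j) := by
  have hset : (univ : Finset (Fin (n+2))).erase (Fin.last (n+1))
      = (univ : Finset (Fin (n+1))).image Fin.castSucc := by
    ext j
    simp only [mem_erase, mem_univ, and_true, mem_image, true_and]
    constructor
    · intro h
      obtain ⟨y, hy⟩ := Fin.exists_castSucc_eq.mpr h
      exact ⟨y, hy⟩
    · rintro ⟨y, rfl⟩
      exact (Fin.castSucc_lt_last y).ne
  rw [hset, Finset.prod_image (fun a _ b _ h => Fin.castSucc_injective _ h)]

private lemma erase_castSucc_prod (n : ℕ) (f : Fin (n+2) → F) (i : Fin (n+1)) :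
    ∏ j ∈ (univ : Finset (Fin (n+2))).erase (Fin.castSucc i), f j
      = f (Fin.last (n+1)) * ∏ j ∈ (univ : Finset (Fin (n+1))).erase i, f (Fin.castSucc j) := by
  have hset : (univ : Finset (Fin (n+2))).erase (Fin.castSucc i)
      = insert (Fin.last (n+1)) (((univ : Finset (Fin (n+1))).erase i).image Fin.castSucc) := by
    ext j
    simp only [mem_erase, mem_univ, and_true, mem_insert, mem_image, true_and]
    constructor
    · intro h
      rcases Fin.eq_castSucc_or_eq_last j with ⟨y, rfl⟩ | rfl
      · refine Or.inr ⟨y, ?_, rfl⟩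
        intro hyi; exact h (by rw [hyi])
      · exact Or.inl rfl
    · rintro (rfl | ⟨y, hy, rfl⟩)
      · exact (Fin.castSucc_lt_last i).ne'
      · exact fun hc => hy (Fin.castSucc_injective _ hc)
  rw [hset, Finset.prod_insert, Finset.prod_image (fun a _ b _ h => Fin.castSucc_injective _ h)]
  simp only [mem_image]
  rintro ⟨y, -, hy⟩
  exact (Fin.castSucc_lt_last y).ne hy

private lemma key : ∀ n : ℕ, ∀ u : Fin (n+1) → F, Function.Injective u → ∀ k : ℕ,
    ∑ i : Fin (n+1), u i ^ k / ∏ j ∈ univ.erase i, (u i - u j)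
      = if n ≤ k then SH (n+1) (k - n) u else 0 := by
  intro n
  induction n with
  | zero =>
    intro u hu k
    rw [if_pos (Nat.zero_le k), Fin.sum_univ_one]
    have h0 : (univ : Finset (Fin 1)).erase 0 = ∅ := by decide
    rw [h0, prod_empty, div_one, Nat.sub_zero, SH_one]
  | succ n ih =>
    intro u hu k
    set a : F := u (Fin.last (n+1)) with ha
    set v : Fin (n+1) → F := u ∘ Fin.castSucc with hv
    have hvinj : Function.Injective v := hu.comp (Fin.castSucc_injective _)
    have hva : ∀ i : Fin (n+1), v i - a ≠ 0 := fun i =>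
      sub_ne_zero.mpr (fun h => (Fin.castSucc_lt_last i).ne (hu h))
    set d : Fin (n+1) → F := fun i => ∏ j ∈ univ.erase i, (v i - v j) with hd
    have hdne : ∀ i, d i ≠ 0 := by
      intro i
      rw [hd]
      apply prod_ne_zero_iff.mpr
      intro j hj
      exact sub_ne_zero.mpr (fun h => (mem_erase.mp hj).1 (hvinj h).symm)
    set Δ : F := ∏ j : Fin (n+1), (a - v j) with hΔ
    -- splitting of denominators
    have hDcast : ∀ i : Fin (n+1),
        ∏ j ∈ (univ : Finset (Fin (n+2))).erase (Fin.castSucc i), (u (Fin.castSucc i) - u j)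
          = (v i - a) * d i := by
      intro i
      rw [erase_castSucc_prod n (fun j => u (Fin.castSucc i) - u j) i]
      rfl
    have hDlast :
        ∏ j ∈ (univ : Finset (Fin (n+2))).erase (Fin.last (n+1)), (u (Fin.last (n+1)) - u j)
          = Δ := by
      rw [erase_last_prod n (fun j => u (Fin.last (n+1)) - u j)]
      rfl
    -- partial fractions fact
    have hzs : ∑ i : Fin (n+1), ((v i - a) * d i)⁻¹ = -Δ⁻¹ := by
      have h0 := zero_sum n u hu
      rw [Fin.sum_univ_castSucc] at h0
      rw [Finset.sum_congr rfl (fun i _ => by rw [hDcast i]), hDlast] at h0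
      exact eq_neg_of_add_eq_zero_left h0
    -- rewrite each term
    have hterm : ∀ i : Fin (n+1),
        u (Fin.castSucc i) ^ k
            / ∏ j ∈ (univ : Finset (Fin (n+2))).erase (Fin.castSucc i), (u (Fin.castSucc i) - u j)
          = a ^ k * ((v i - a) * d i)⁻¹
            + (∑ t ∈ range k, a ^ (k - 1 - t) * (v i ^ t / d i)) := by
      intro i
      rw [hDcast i]
      have hgeom : (v i : F) ^ k = a ^ k + (∑ t ∈ range k, v i ^ t * a ^ (k - 1 - t)) * (v i - a) := by
        rw [geom_sum₂_mul]; ring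
      have hcast : u (Fin.castSucc i) = v i := rfl
      rw [hcast, hgeom, add_div]
      congr 1
      · rw [div_eq_mul_inv]
      · rw [mul_comm (v i - a) (d i), mul_div_mul_right _ _ (hva i), Finset.sum_div]
        apply Finset.sum_congr rfl
        intro t _
        rw [mul_comm (v i ^ t) (a ^ (k - 1 - t)), mul_div_assoc]
    rw [Fin.sum_univ_castSucc, Finset.sum_congr rfl (fun i _ => hterm i), hDlast,
      Finset.sum_add_distrib, ← Finset.mul_sum, hzs]
    have hswap : ∑ i : Fin (n+1), ∑ t ∈ range k, a ^ (k - 1 - t) * (v i ^ t / d i)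
        = ∑ t ∈ range k, a ^ (k - 1 - t) * (if n ≤ t then SH (n+1) (t - n) v else 0) := by
      rw [Finset.sum_comm]
      apply Finset.sum_congr rfl
      intro t _
      rw [← Finset.mul_sum, ih v hvinj t]
    rw [hswap]
    have hmain : ∑ t ∈ range k, a ^ (k - 1 - t) * (if n ≤ t then SH (n+1) (t - n) v else 0)
        = if n + 1 ≤ k then SH (n+2) (k - (n+1)) u else 0 := by
      by_cases hk : n + 1 ≤ k
      · rw [if_pos hk]
        have hsplit : ∑ t ∈ range k, a ^ (k - 1 - t) * (if n ≤ t then SH (n+1) (t - n) v else 0)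
            = ∑ t ∈ Ico n k, a ^ (k - 1 - t) * SH (n+1) (t - n) v := by
          rw [← Finset.sum_filter_add_sum_filter_not (range k) (fun t => n ≤ t)]
          have h2 : ∀ t ∈ (range k).filter (fun t => ¬ n ≤ t),
              a ^ (k - 1 - t) * (if n ≤ t then SH (n+1) (t - n) v else 0) = 0 := by
            intro t ht
            rw [if_neg (mem_filter.mp ht).2, mul_zero]
          rw [Finset.sum_eq_zero h2, add_zero]
          have h3 : (range k).filter (fun t => n ≤ t) = Ico n k := by
            ext t
            simp [Finset.mem_filter, Finset.mem_range, Finset.mem_Ico, and_comm]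
          rw [h3]
          apply Finset.sum_congr rfl
          intro t ht
          rw [if_pos (Finset.mem_Ico.mp ht).1]
        rw [hsplit, Finset.sum_Ico_eq_sum_range]
        have hkn : k - n = (k - (n+1)) + 1 := by omega
        rw [hkn]
        rw [SH_full (n+1) u (k - (n+1))]
        apply Finset.sum_congr rfl
        intro l hl
        rw [Finset.mem_range] at hl
        have h4 : k - 1 - (n + l) = k - (n+1) - l := by omega
        have h5 : n + l - n = l := by omega
        rw [h4, h5]
      · rw [if_neg hk]
        apply Finset.sum_eq_zero
        intro t ht
        rw [Finset.mem_range] at ht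
        rw [if_neg (by omega), mul_zero]
    rw [hmain]
    rw [← ha]
    by_cases hk : n + 1 ≤ k
    · rw [if_pos hk]
      ring
    · rw [if_neg hk]
      ring

end Aux



/-- for pairwise distinct `u₁, …, u_n` in a field and `m ≥ 0`,
`∑ᵢ uᵢ^{n−1+m}/∏_{j≠i}(uᵢ − uⱼ) = h_m(u₁, …, u_n)`, the complete homogeneous
symmetric polynomial of degree `m` evaluated at `u` (expressed as the sum over
all multisets of size `m` of indices of the corresponding monomial). -/
theorem stmt_9 {F : Type*} [Field F] (n : ℕ) (hn : 1 ≤ n) (u : Fin n → F)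
    (hu : Function.Injective u) (m : ℕ) :
    ∑ i : Fin n, u i ^ (n - 1 + m) / ∏ j ∈ Finset.univ.erase i, (u i - u j)
      = ∑ s : Sym (Fin n) m, ((s : Multiset (Fin n)).map u).prod := by

  obtain ⟨n, rfl⟩ : ∃ n', n = n' + 1 := ⟨n - 1, by omega⟩
  have h := key n u hu (n + m)
  rw [if_pos (Nat.le_add_right n m), Nat.add_sub_cancel_left] at h
  have he : n + 1 - 1 + m = n + m := by omega
  rw [he, h]
  rfl
end
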